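/- Let T and M_p be symmetric positive definite n×n matrices with M_p ⪰ T, and fix b ∈ ℝⁿ. Define the iteration x ↦ x + M_p⁻¹(b − Tx). Then applying this iteration n times starting from x⁰, the resulting point xⁿ satisfies xⁿ = x⁰ + M_{p,n}⁻¹(b − Tx⁰) for some symmetric positive definite matrix M_{p,n} with M_{p,n} ⪰ T. -/

import Mathlib

open Matrix

section SqrtCompat

open scoped MatrixOrder

noncomputable def Matrix.PosSemidef.sqrt {n : ℕ} {A : Matrix (Fin n) (Fin n) ℝ}
    (_hA : A.PosSemidef) : Matrix (Fin n) (Fin n) ℝ := CFC.sqrt A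

lemma Matrix.PosSemidef.sqrt_mul_self {n : ℕ} {A : Matrix (Fin n) (Fin n) ℝ}
    (hA : A.PosSemidef) : hA.sqrt * hA.sqrt = A :=
  CFC.sqrt_mul_sqrt_self A hA.nonneg

lemma Matrix.PosSemidef.posSemidef_sqrt {n : ℕ} {A : Matrix (Fin n) (Fin n) ℝ}
    (hA : A.PosSemidef) : hA.sqrt.PosSemidef :=
  (CFC.sqrt_nonneg A).posSemidef

end SqrtCompat

namespace Stmt10Aux

variable {n : ℕ}

lemma posDef_of_posSemidef_isUnit {A : Matrix (Fin n) (Fin n) ℝ}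
    (hA : A.PosSemidef) (h : IsUnit A) : A.PosDef := by
  refine posDef_iff_dotProduct_mulVec.mpr
    ⟨hA.1, fun x hx => (hA.dotProduct_mulVec_nonneg x).lt_of_ne fun heq => hx ?_⟩
  have h0 : A *ᵥ x = 0 := (hA.dotProduct_mulVec_zero_iff x).mp heq.symm
  exact mulVec_injective_iff_isUnit.mpr h (h0.trans (A.mulVec_zero).symm)

lemma posDef_conj {A B : Matrix (Fin n) (Fin n) ℝ}
    (hA : A.PosDef) (hB : IsUnit B) : (Bᴴ * A * B).PosDef := by
  refine posDef_iff_dotProduct_mulVec.mpr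
    ⟨isHermitian_conjTranspose_mul_mul B hA.1, fun x hx => ?_⟩
  have hBx : B *ᵥ x ≠ 0 := fun h =>
    hx (mulVec_injective_iff_isUnit.mpr hB (h.trans (B.mulVec_zero).symm))
  simpa only [star_mulVec, dotProduct_mulVec, vecMul_vecMul] using hA.dotProduct_mulVec_pos hBx

lemma sqrt_comm {A : Matrix (Fin n) (Fin n) ℝ} (hA : A.PosSemidef) :
    hA.sqrt * A = A * hA.sqrt := by
  calc hA.sqrt * A = hA.sqrt * (hA.sqrt * hA.sqrt) := by rw [hA.sqrt_mul_self]
    _ = (hA.sqrt * hA.sqrt) * hA.sqrt := by rw [Matrix.mul_assoc]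
    _ = A * hA.sqrt := by rw [hA.sqrt_mul_self]

lemma sqrt_comm_pow {A : Matrix (Fin n) (Fin n) ℝ} (hA : A.PosSemidef) (m : ℕ) :
    hA.sqrt * A ^ m = A ^ m * hA.sqrt := by
  induction m with
  | zero => simp
  | succ m ih =>
    rw [pow_succ, ← Matrix.mul_assoc, ih, Matrix.mul_assoc, sqrt_comm hA,
      ← Matrix.mul_assoc]

lemma sqrt_conj {A : Matrix (Fin n) (Fin n) ℝ} (hA : A.PosSemidef) (m : ℕ) :
    hA.sqrt * (1 - A ^ m) * hA.sqrt = A - A ^ (m + 1) := by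
  rw [Matrix.mul_sub, Matrix.mul_one, Matrix.sub_mul, hA.sqrt_mul_self,
    sqrt_comm_pow hA, Matrix.mul_assoc, hA.sqrt_mul_self, ← pow_succ]

/-- If `0 ⪯ B` and `B ⪯ 1` then `B ^ m ⪯ 1`. -/
lemma one_sub_pow_posSemidef {B : Matrix (Fin n) (Fin n) ℝ}
    (hB : B.PosSemidef) (h1 : (1 - B).PosSemidef) (m : ℕ) :
    (1 - B ^ m).PosSemidef := by
  induction m with
  | zero => simpa using Matrix.PosSemidef.zero
  | succ m ih =>
    have key : (1 : Matrix (Fin n) (Fin n) ℝ) - B ^ (m + 1)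
        = (1 - B) + hB.sqrtᴴ * (1 - B ^ m) * hB.sqrt := by
      rw [hB.posSemidef_sqrt.1, sqrt_conj hB m]; abel
    rw [key]
    exact h1.add (ih.conjTranspose_mul_mul_same hB.sqrt)

/-- If `0 ⪯ B` and `B ≺ 1` then `B ^ (m+1) ≺ 1`. -/
lemma one_sub_pow_posDef {B : Matrix (Fin n) (Fin n) ℝ}
    (hB : B.PosSemidef) (h1 : (1 - B).PosDef) (m : ℕ) :
    (1 - B ^ (m + 1)).PosDef := by
  have key : (1 : Matrix (Fin n) (Fin n) ℝ) - B ^ (m + 1)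
      = (1 - B) + hB.sqrtᴴ * (1 - B ^ m) * hB.sqrt := by
    rw [hB.posSemidef_sqrt.1, sqrt_conj hB m]; abel
  rw [key]
  exact h1.add_posSemidef
    ((one_sub_pow_posSemidef hB h1.posSemidef m).conjTranspose_mul_mul_same hB.sqrt)

/-- If `0 ≺ A ⪯ 1` then `1 ⪯ A⁻¹`. -/
lemma inv_sub_one_posSemidef {A : Matrix (Fin n) (Fin n) ℝ}
    (hA : A.PosDef) (h1 : (1 - A).PosSemidef) : (A⁻¹ - 1).PosSemidef := by
  have hdet : IsUnit A.det := isUnit_iff_ne_zero.mpr hA.det_pos.ne'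
  have hAA : A - A * A = hA.posSemidef.sqrtᴴ * (1 - A) * hA.posSemidef.sqrt := by
    have h := sqrt_conj hA.posSemidef 1
    simp only [pow_one] at h
    rw [hA.posSemidef.posSemidef_sqrt.1, h, pow_succ, pow_one]
  have hinv : A⁻¹ - 1 = (A⁻¹)ᴴ * (A - A * A) * A⁻¹ := by
    rw [(hA.isHermitian.inv).eq, Matrix.mul_sub, ← Matrix.mul_assoc A⁻¹ A A,
      A.nonsing_inv_mul hdet, Matrix.sub_mul, Matrix.one_mul, Matrix.one_mul,
      A.mul_nonsing_inv hdet]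
  rw [hinv, hAA]
  exact ((h1.conjTranspose_mul_mul_same hA.posSemidef.sqrt).conjTranspose_mul_mul_same A⁻¹)

lemma conj_pow {P Pi A : Matrix (Fin n) (Fin n) ℝ}
    (h1 : Pi * P = 1) (h2 : P * Pi = 1) (m : ℕ) :
    (Pi * A * P) ^ m = Pi * A ^ m * P := by
  induction m with
  | zero => rw [pow_zero, pow_zero, Matrix.mul_one, h1]
  | succ m ih =>
    rw [pow_succ, ih, pow_succ]
    simp only [Matrix.mul_assoc]
    rw [← Matrix.mul_assoc P Pi, h2, Matrix.one_mul]

end Stmt10Aux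

open Stmt10Aux

theorem stmt_10 {n : ℕ}
    (T Mp : Matrix (Fin n) (Fin n) ℝ)
    (hT : T.PosDef) (hMp : Mp.PosDef)
    (hfeas : (Mp - T).PosSemidef)
    (b : Fin n → ℝ)
    (F : (Fin n → ℝ) → (Fin n → ℝ))
    (hF : ∀ x, F x = x + Mp⁻¹.mulVec (b - T.mulVec x))
    (k : ℕ) (hk : 1 ≤ k) :
    ∃ Mpk : Matrix (Fin n) (Fin n) ℝ, Mpk.PosDef ∧ (Mpk - T).PosSemidef ∧
      ∀ x0 : Fin n → ℝ, F^[k] x0 = x0 + Mpk⁻¹.mulVec (b - T.mulVec x0) := by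
  -- basic invertibility facts
  have hTdet : IsUnit T.det := isUnit_iff_ne_zero.mpr hT.det_pos.ne'
  have hMpdet : IsUnit Mp.det := isUnit_iff_ne_zero.mpr hMp.det_pos.ne'
  have hTT : T * T⁻¹ = 1 := T.mul_nonsing_inv hTdet
  have hTT' : T⁻¹ * T = 1 := T.nonsing_inv_mul hTdet
  -- square roots
  set W := hT.posSemidef.sqrt with hWdef
  have hWps : W.PosSemidef := hT.posSemidef.posSemidef_sqrt
  have hWW : W * W = T := hT.posSemidef.sqrt_mul_self
  have hWdet : IsUnit W.det := by
    have h2 : W.det * W.det = T.det := by rw [← Matrix.det_mul, hWW]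
    exact isUnit_iff_ne_zero.mpr fun h => hT.det_pos.ne' (by rw [← h2, h, mul_zero])
  have hWunit : IsUnit W := (Matrix.isUnit_iff_isUnit_det W).mpr hWdet
  have hWH : Wᴴ = W := hWps.1
  have hWinv : W * W⁻¹ = 1 := W.mul_nonsing_inv hWdet
  have hWinv' : W⁻¹ * W = 1 := W.nonsing_inv_mul hWdet
  have hTinvWW : T⁻¹ = W⁻¹ * W⁻¹ := by rw [← hWW, Matrix.mul_inv_rev]
  -- the sqrt of Mp, used to prove T⁻¹ - Mp⁻¹ ⪰ 0
  set U := hMp.posSemidef.sqrt with hUdef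
  have hUps : U.PosSemidef := hMp.posSemidef.posSemidef_sqrt
  have hUU : U * U = Mp := hMp.posSemidef.sqrt_mul_self
  have hUdet : IsUnit U.det := by
    have h2 : U.det * U.det = Mp.det := by rw [← Matrix.det_mul, hUU]
    exact isUnit_iff_ne_zero.mpr fun h => hMp.det_pos.ne' (by rw [← h2, h, mul_zero])
  have hUunit : IsUnit U := (Matrix.isUnit_iff_isUnit_det U).mpr hUdet
  have hUH : Uᴴ = U := hUps.1
  have hUinv : U * U⁻¹ = 1 := U.mul_nonsing_inv hUdet
  have hUinv' : U⁻¹ * U = 1 := U.nonsing_inv_mul hUdet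
  have hUinvH : (U⁻¹)ᴴ = U⁻¹ := (hUps.1.inv).eq
  have hUinvUnit : IsUnit (U⁻¹ : Matrix (Fin n) (Fin n) ℝ) :=
    isUnit_nonsing_inv_iff.mpr hUunit
  have hMpinvUU : Mp⁻¹ = U⁻¹ * U⁻¹ := by rw [← hUU, Matrix.mul_inv_rev]
  -- C := U⁻¹ T U⁻¹ is PD with 1 - C ⪰ 0, hence C⁻¹ - 1 ⪰ 0, i.e. T⁻¹ - Mp⁻¹ ⪰ 0
  have hCpd : (U⁻¹ * T * U⁻¹).PosDef := by
    have := posDef_conj (B := U⁻¹) hT hUinvUnit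
    rwa [hUinvH] at this
  have hC1 : ((1 : Matrix (Fin n) (Fin n) ℝ) - U⁻¹ * T * U⁻¹).PosSemidef := by
    have key : (1 : Matrix (Fin n) (Fin n) ℝ) - U⁻¹ * T * U⁻¹
        = (U⁻¹)ᴴ * (Mp - T) * U⁻¹ := by
      rw [hUinvH, Matrix.mul_sub, Matrix.sub_mul]
      congr 1
      rw [← hUU, ← Matrix.mul_assoc, Matrix.mul_assoc (U⁻¹) U U, ← Matrix.mul_assoc (U⁻¹) U,
        hUinv', Matrix.one_mul, hUinv]
    rw [key]
    exact hfeas.conjTranspose_mul_mul_same U⁻¹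
  have hCinv : (U⁻¹ * T * U⁻¹)⁻¹ = U * T⁻¹ * U := by
    rw [Matrix.mul_inv_rev, Matrix.mul_inv_rev, U.nonsing_inv_nonsing_inv hUdet,
      Matrix.mul_assoc]
  have hTMpinv : (T⁻¹ - Mp⁻¹).PosSemidef := by
    have h1 := inv_sub_one_posSemidef hCpd hC1
    rw [hCinv] at h1
    have key : T⁻¹ - Mp⁻¹ = (U⁻¹)ᴴ * (U * T⁻¹ * U - 1) * U⁻¹ := by
      rw [hUinvH, Matrix.mul_sub, Matrix.mul_one, Matrix.sub_mul, hMpinvUU]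
      congr 1
      simp only [Matrix.mul_assoc]
      rw [hUinv, Matrix.mul_one, ← Matrix.mul_assoc, hUinv', Matrix.one_mul]
    rw [key]
    exact h1.conjTranspose_mul_mul_same U⁻¹
  -- B := 1 - W Mp⁻¹ W  satisfies 0 ⪯ B and 1 - B ≻ 0
  set B : Matrix (Fin n) (Fin n) ℝ := 1 - W * Mp⁻¹ * W with hBdef
  have hBps : B.PosSemidef := by
    have key : B = Wᴴ * (T⁻¹ - Mp⁻¹) * W := by
      rw [hWH, hBdef, Matrix.mul_sub, Matrix.sub_mul]
      congr 1
      rw [hTinvWW, ← Matrix.mul_assoc, Matrix.mul_assoc W (W⁻¹) (W⁻¹),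
        ← Matrix.mul_assoc W (W⁻¹), hWinv, Matrix.one_mul, hWinv']
    rw [key]
    exact hTMpinv.conjTranspose_mul_mul_same W
  have hB1 : ((1 : Matrix (Fin n) (Fin n) ℝ) - B).PosDef := by
    have key : (1 : Matrix (Fin n) (Fin n) ℝ) - B = Wᴴ * Mp⁻¹ * W := by
      rw [hBdef, hWH]; abel
    rw [key]
    exact posDef_conj hMp.inv hWunit
  -- the matrix G := 1 - B ^ k is PD and G⁻¹ - 1 ⪰ 0
  obtain ⟨j, rfl⟩ : ∃ j, k = j + 1 := ⟨k - 1, (Nat.succ_pred_eq_of_pos hk).symm⟩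
  set G : Matrix (Fin n) (Fin n) ℝ := 1 - B ^ (j + 1) with hGdef
  have hGpd : G.PosDef := one_sub_pow_posDef hBps hB1 j
  have hGdet : IsUnit G.det := isUnit_iff_ne_zero.mpr hGpd.det_pos.ne'
  have hGsub : (G⁻¹ - 1).PosSemidef := by
    refine inv_sub_one_posSemidef hGpd ?_
    have : (1 : Matrix (Fin n) (Fin n) ℝ) - G = B ^ (j + 1) := by rw [hGdef]; abel
    rw [this]
    exact hBps.pow (j + 1)
  -- conjugation: E := 1 - Mp⁻¹ T equals W⁻¹ B W
  set E : Matrix (Fin n) (Fin n) ℝ := 1 - Mp⁻¹ * T with hEdef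
  have hEconj : E = W⁻¹ * B * W := by
    rw [hEdef, hBdef, Matrix.mul_sub, Matrix.sub_mul, Matrix.mul_one, hWinv']
    congr 1
    rw [← hWW]
    rw [← Matrix.mul_assoc, ← Matrix.mul_assoc, ← Matrix.mul_assoc, hWinv', Matrix.one_mul]
  have hEpow : ∀ m : ℕ, E ^ m = W⁻¹ * B ^ m * W := fun m => by
    rw [hEconj]; exact conj_pow hWinv' hWinv m
  -- the iteration identity
  have hiter : ∀ (m : ℕ) (x0 : Fin n → ℝ),
      F^[m] x0 = x0 + ((1 - E ^ m) * T⁻¹) *ᵥ (b - T *ᵥ x0) := by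
    intro m
    induction m with
    | zero => intro x0; simp
    | succ m ih =>
      intro x0
      rw [Function.iterate_succ_apply', ih, hF]
      have hres : b - T *ᵥ (x0 + ((1 - E ^ m) * T⁻¹) *ᵥ (b - T *ᵥ x0))
          = (1 - T * ((1 - E ^ m) * T⁻¹)) *ᵥ (b - T *ᵥ x0) := by
        rw [Matrix.mulVec_add, Matrix.sub_mulVec, Matrix.one_mulVec]
        simp only [Matrix.mulVec_mulVec, Matrix.mul_assoc]
        abel
      have hmat : (1 - E ^ (m + 1)) * T⁻¹
          = (1 - E ^ m) * T⁻¹ + Mp⁻¹ * (1 - T * ((1 - E ^ m) * T⁻¹)) := by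
        rw [pow_succ', hEdef]
        simp only [Matrix.sub_mul, Matrix.mul_sub, Matrix.one_mul, Matrix.mul_one,
          Matrix.mul_assoc]
        rw [hTT, Matrix.mul_one]
        abel
      rw [hres, Matrix.mulVec_mulVec, hmat, Matrix.add_mulVec, ← add_assoc]
  -- define Mpk and conclude
  refine ⟨W * G⁻¹ * W, ?_, ?_, ?_⟩
  · have := posDef_conj (B := W) hGpd.inv hWunit
    rwa [hWH] at this
  · have key : W * G⁻¹ * W - T = Wᴴ * (G⁻¹ - 1) * W := by
      rw [hWH, Matrix.mul_sub, Matrix.sub_mul, Matrix.mul_one, hWW]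
    rw [key]
    exact hGsub.conjTranspose_mul_mul_same W
  · intro x0
    have hMpkinv : (W * G⁻¹ * W)⁻¹ = (1 - E ^ (j + 1)) * T⁻¹ := by
      rw [Matrix.mul_inv_rev, Matrix.mul_inv_rev, G.nonsing_inv_nonsing_inv hGdet]
      have h1 : (1 : Matrix (Fin n) (Fin n) ℝ) - E ^ (j + 1) = W⁻¹ * G * W := by
        rw [hEpow, hGdef, Matrix.mul_sub, Matrix.sub_mul, Matrix.mul_one, hWinv']
      rw [h1, hTinvWW]
      simp only [Matrix.mul_assoc]
      rw [← Matrix.mul_assoc W (W⁻¹) (W⁻¹), hWinv, Matrix.one_mul]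
    rw [hiter (j + 1) x0, hMpkinv]
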